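/- For n ≥ 1 and 0 ≤ k ≤ n−1, the number of sequences (u_1, ..., u_n) with 1 ≤ u_i ≤ n, satisfying condition (1), and whose largest index i with u_i > i equals k (with k = 0 meaning u_i ≤ i for all i), equals C_k^(n−1−k) · C_{n−k}. -/

import Mathlib

open Finset


def gc (n k : ℕ) : ℚ := ((k : ℚ) + 1) / (2 * (n : ℚ) + (k : ℚ) + 1) * ((2 * n + k + 1).choose n : ℚ)

def cat (n : ℕ) : ℚ := 1 / ((n : ℚ) + 1) * ((2 * n).choose n : ℚ)

lemma gc_zero_left (b : ℕ) : gc 0 b = 1 := by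
  unfold gc
  rw [Nat.choose_zero_right]
  push_cast
  have : (b : ℚ) + 1 ≠ 0 := by positivity
  field_simp
  ring

lemma choose_id1 (m : ℕ) : (2*m+1) * Nat.choose (2*m) m = (m+1) * Nat.choose (2*m+1) m := by
  have h := Nat.add_one_mul_choose_eq (2*m) m
  have hs : Nat.choose (2*m+1) (m+1) = Nat.choose (2*m+1) m := by
    have h2 := Nat.choose_symm (n := 2*m+1) (k := m+1) (by omega)
    have e : 2*m+1 - (m+1) = m := by omega
    rw [e] at h2
    exact h2.symm
  rw [hs] at h
  rw [h]
  ring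

lemma catalan_cast (m : ℕ) : (catalan m : ℚ) = cat m := by
  have h := succ_mul_catalan_eq_centralBinom m
  unfold cat
  have hcb : m.centralBinom = (2*m).choose m := rfl
  rw [hcb] at h
  have h' : ((m:ℚ)+1) * (catalan m : ℚ) = ((2*m).choose m : ℚ) := by
    exact_mod_cast congrArg (Nat.cast : ℕ → ℚ) h
  have hne : ((m:ℚ)+1) ≠ 0 := by positivity
  field_simp
  linarith [h']

lemma gc_zero_right (m : ℕ) : gc m 0 = (catalan m : ℚ) := by
  unfold gc
  have h1 : ((m:ℚ)+1) * (catalan m : ℚ) = ((2*m).choose m : ℚ) := by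
    have h := succ_mul_catalan_eq_centralBinom m
    have hcb : m.centralBinom = (2*m).choose m := rfl
    rw [hcb] at h
    exact_mod_cast congrArg (Nat.cast : ℕ → ℚ) h
  have h2 : ((2*m+1 : ℕ) : ℚ) * ((2*m).choose m : ℚ) = ((m+1 : ℕ):ℚ) * ((2*m+1).choose m : ℚ) := by
    exact_mod_cast congrArg (Nat.cast : ℕ → ℚ) (choose_id1 m)
  push_cast at h2 ⊢
  have hne : 2*(m:ℚ)+1 ≠ 0 := by positivity
  have hne2 : (m:ℚ)+1 ≠ 0 := by positivity
  field_simp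
  nlinarith [h1, h2]

lemma gc_one_right (m : ℕ) : gc m 1 = (catalan (m+1) : ℚ) := by
  unfold gc
  have h1 : ((m:ℚ)+2) * (catalan (m+1) : ℚ) = ((2*(m+1)).choose (m+1) : ℚ) := by
    have h := succ_mul_catalan_eq_centralBinom (m+1)
    have hcb : (m+1).centralBinom = (2*(m+1)).choose (m+1) := rfl
    rw [hcb] at h
    have h2 := congrArg (Nat.cast : ℕ → ℚ) h
    push_cast at h2 ⊢
    linarith [h2]
  have h2 : ((2*m+2).choose (m+1) : ℚ) * ((m:ℚ)+1) = ((2*m+2).choose m : ℚ) * ((m:ℚ)+2) := by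
    have h := Nat.choose_succ_right_eq (2*m+2) m
    have e : 2*m+2 - m = m+2 := by omega
    rw [e] at h
    exact_mod_cast congrArg (Nat.cast : ℕ → ℚ) h
  have e1 : 2*m+1+1 = 2*m+2 := by ring
  rw [e1]
  have e2 : 2*(m+1) = 2*m+2 := by ring
  rw [e2] at h1
  have hne : 2*(m:ℚ)+1+1 ≠ 0 := by positivity
  have hne2 : (m:ℚ)+2 ≠ 0 := by positivity
  have hne3 : (m:ℚ)+1 ≠ 0 := by positivity
  field_simp
  push_cast
  nlinarith [h1, h2]

lemma gc_pascal (m b : ℕ) : gc (m+1) (b+1) = gc (m+1) b + gc m (b+2) := by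
  unfold gc
  have e1 : 2*(m+1)+(b+1)+1 = (2*m+b+3)+1 := by ring
  have e2 : 2*(m+1)+b+1 = 2*m+b+3 := by ring
  have e3 : 2*m+(b+2)+1 = 2*m+b+3 := by ring
  rw [e1, e2, e3]
  set N := 2*m+b+3 with hN
  have hch : ((N+1).choose (m+1) : ℚ) = (N.choose m : ℚ) + (N.choose (m+1) : ℚ) := by
    exact_mod_cast congrArg (Nat.cast : ℕ → ℚ) (Nat.choose_succ_succ' N m)
  have hD : (N.choose (m+1) : ℚ) * ((m:ℚ)+1) = (N.choose m : ℚ) * ((m:ℚ)+(b:ℚ)+3) := by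
    have h := Nat.choose_succ_right_eq N m
    have e : N - m = m+b+3 := by omega
    rw [e] at h
    exact_mod_cast congrArg (Nat.cast : ℕ → ℚ) h
  rw [hch]
  push_cast
  have hne1 : 2*((m:ℚ)+1)+((b:ℚ)+1)+1 ≠ 0 := by positivity
  have hne2 : 2*((m:ℚ)+1)+(b:ℚ)+1 ≠ 0 := by positivity
  have hne3 : 2*(m:ℚ)+((b:ℚ)+2)+1 ≠ 0 := by positivity
  field_simp
  nlinarith [hD, sq_nonneg ((m:ℚ)+(b:ℚ))]

lemma gc_conv (M : ℕ) : ∀ b : ℕ, ∑ r ∈ range (M+1), gc r b * gc (M-r) 0 = gc M (b+1) := by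
  induction M with
  | zero =>
    intro b
    simp [gc_zero_left]
  | succ M ihM =>
    intro b
    induction b with
    | zero =>
      have hcat : ∀ s : ℕ, gc s 0 = (catalan s : ℚ) := gc_zero_right
      calc ∑ r ∈ range (M+1+1), gc r 0 * gc (M+1-r) 0
          = ∑ r ∈ range (M+1+1), (catalan r : ℚ) * (catalan (M+1-r) : ℚ) := by
            refine Finset.sum_congr rfl fun r _ => by rw [hcat, hcat]
        _ = ((catalan (M+2) : ℚ)) := by
            rw [catalan_succ (M+1)]
            push_cast [Finset.sum_range fun i => (catalan i : ℚ) * (catalan (M+1-i) : ℚ)]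
            norm_num
        _ = gc (M+1) 1 := (gc_one_right (M+1)).symm
    | succ b ihb =>
      have key : ∑ r ∈ range (M+1+1), gc r (b+1) * gc (M+1-r) 0
          = ∑ r ∈ range (M+1+1), gc r b * gc (M+1-r) 0
            + ∑ r ∈ range (M+1), gc r (b+2) * gc (M-r) 0 := by
        rw [Finset.sum_range_succ', Finset.sum_range_succ' _ (M+1)]
        have step : ∀ r ∈ range (M+1), gc (r+1) (b+1) * gc (M+1-(r+1)) 0
            = gc (r+1) b * gc (M+1-(r+1)) 0 + gc r (b+2) * gc (M-r) 0 := by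
          intro r _
          have e : M+1-(r+1) = M-r := by omega
          rw [e, gc_pascal r b, add_mul]
        rw [Finset.sum_congr rfl step, Finset.sum_add_distrib]
        simp [gc_zero_left]
        ring
      rw [key, ihb, ihM (b+2), ← gc_pascal M (b+1)]


def Cond {n : ℕ} (u : Fin n → ℕ) : Prop :=
  ∀ i j : Fin n, i < j →
    ¬(1 ≤ (u j : ℤ) - (((j : ℕ) : ℤ) - ((i : ℕ) : ℤ)) ∧
      (u j : ℤ) - (((j : ℕ) : ℤ) - ((i : ℕ) : ℤ)) ≤ (u i : ℤ) - 1)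

lemma cond_iff {n : ℕ} (u : Fin n → ℕ) :
    Cond u ↔ ∀ i j : Fin n, (i:ℕ) < (j:ℕ) →
      (u j + (i:ℕ) ≤ (j:ℕ) ∨ u i + (j:ℕ) ≤ u j + (i:ℕ)) := by
  unfold Cond
  constructor
  · intro h i j hij
    have := h i j (Fin.lt_def.mpr hij)
    omega
  · intro h i j hij
    have := h i j (Fin.lt_def.mp hij)
    omega

def Tset (a m : ℕ) : Set (Fin m → ℕ) :=
  {y | (∀ p : Fin m, 1 ≤ y p ∧ y p ≤ (p:ℕ)+1+a) ∧ Cond y}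

lemma mem_Tset {a m : ℕ} (y : Fin m → ℕ) :
    y ∈ Tset a m ↔ (∀ p : Fin m, 1 ≤ y p ∧ y p ≤ (p:ℕ)+1+a) ∧
      (∀ i j : Fin m, (i:ℕ) < (j:ℕ) → (y j + (i:ℕ) ≤ (j:ℕ) ∨ y i + (j:ℕ) ≤ y j + (i:ℕ))) := by
  unfold Tset
  rw [Set.mem_setOf_eq, cond_iff]

def topIdx (a M : ℕ) (y : Fin (M+1) → ℕ) : ℕ :=
  if h : (Finset.univ.filter (fun r : Fin (M+1) => y r = (r:ℕ)+1+a)).Nonempty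
  then ((Finset.univ.filter (fun r : Fin (M+1) => y r = (r:ℕ)+1+a)).max' h : Fin (M+1)) + 1
  else 0

lemma topIdx_lt (a M : ℕ) (y : Fin (M+1) → ℕ) : topIdx a M y < M+2 := by
  unfold topIdx
  split
  · next h => exact Nat.add_lt_add_right (Fin.is_lt _) 1
  · omega

lemma topIdx_eq_zero_iff (a M : ℕ) (y : Fin (M+1) → ℕ) :
    topIdx a M y = 0 ↔ ∀ r : Fin (M+1), y r ≠ (r:ℕ)+1+a := by
  unfold topIdx
  split
  · next h =>
    constructor
    · exact fun h0 => absurd h0 (by omega)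
    · intro hall
      obtain ⟨r, hr⟩ := h
      simp only [mem_filter] at hr
      exact absurd hr.2 (hall r)
  · next h =>
    constructor
    · intro _ r hr
      exact h ⟨r, by simp [mem_filter, hr]⟩
    · intro _; rfl

lemma topIdx_eq_succ_iff (a M c : ℕ) (hc : c < M+1) (y : Fin (M+1) → ℕ) :
    topIdx a M y = c+1 ↔
      (y ⟨c, hc⟩ = c+1+a ∧ ∀ q : Fin (M+1), c < (q:ℕ) → y q ≠ (q:ℕ)+1+a) := by
  unfold topIdx
  set s := Finset.univ.filter (fun r : Fin (M+1) => y r = (r:ℕ)+1+a) with hs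
  split
  · next h =>
    constructor
    · intro heq
      have hmax : ((s.max' h : Fin (M+1)) : ℕ) = c := Nat.add_right_cancel heq
      have hmem := (mem_filter.mp (s.max'_mem h)).2
      constructor
      · have he : s.max' h = ⟨c, hc⟩ := Fin.ext hmax
        rw [he] at hmem
        simpa using hmem
      · intro q hq hqtop
        have hqmem : q ∈ s := mem_filter.mpr ⟨mem_univ _, hqtop⟩
        have hle := s.le_max' q hqmem
        rw [Fin.le_def, hmax] at hle
        omega
    · rintro ⟨htop, hlast⟩
      have hcm : (⟨c, hc⟩ : Fin (M+1)) ∈ s := mem_filter.mpr ⟨mem_univ _, htop⟩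
      have h1 : c ≤ ((s.max' h : Fin (M+1)) : ℕ) := by
        have h1' := s.le_max' _ hcm
        rw [Fin.le_def] at h1'
        simpa using h1' 
      have hmem := (mem_filter.mp (s.max'_mem h)).2
      have h2 : ¬ c < ((s.max' h : Fin (M+1)) : ℕ) := fun hlt => hlast _ hlt hmem
      omega
  · next h =>
    constructor
    · exact fun h0 => absurd h0 (by omega)
    · rintro ⟨htop, -⟩
      exact absurd ⟨⟨c, hc⟩, mem_filter.mpr ⟨mem_univ _, htop⟩⟩ h

def Pset (n k : ℕ) : Set (Fin k → ℕ) :=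
  {x | (∀ i, 1 ≤ x i ∧ x i ≤ n) ∧ Cond x ∧ ∀ hk : 0 < k, k < x ⟨k-1, by omega⟩}

lemma finite_bdd {m : ℕ} (S : Set (Fin m → ℕ)) (B : ℕ) (h : ∀ y ∈ S, ∀ p, y p ≤ B) :
    S.Finite := by
  have hsub : S ⊆ Set.pi Set.univ (fun _ : Fin m => Set.Iic B) := by
    intro y hy p _
    exact h y hy p
  exact (Set.Finite.pi fun _ => Set.finite_Iic B).subset hsub

lemma Tfin (a m : ℕ) : (Tset a m).Finite :=
  finite_bdd _ (m+a+1) (fun y hy p => le_trans (hy.1 p).2 (by omega))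

lemma Pfin (n k : ℕ) : (Pset n k).Finite :=
  finite_bdd _ n (fun y hy p => (hy.1 p).2)

lemma ncard_prod {α β : Type*} (s : Set α) (t : Set β) :
    (s ×ˢ t).ncard = s.ncard * t.ncard := by
  rw [← Nat.card_coe_set_eq, ← Nat.card_coe_set_eq, ← Nat.card_coe_set_eq,
    Nat.card_congr (Equiv.Set.prod s t), Nat.card_prod]

lemma ncard_fiber_sum {α : Type*} {s : Set α} (hs : s.Finite) (g : α → ℕ) (N : ℕ)
    (hg : ∀ x ∈ s, g x < N) :
    s.ncard = ∑ c ∈ range N, {x ∈ s | g x = c}.ncard := by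
  classical
  rw [Set.ncard_eq_toFinset_card _ hs]
  rw [Finset.card_eq_sum_card_fiberwise (f := g) (t := range N)
    (fun x hx => mem_range.mpr (hg x (hs.mem_toFinset.mp hx)))]
  refine Finset.sum_congr rfl fun c _ => ?_
  have he : {x ∈ s | g x = c} = ↑(hs.toFinset.filter (fun x => g x = c)) := by
    ext x
    simp [Set.Finite.mem_toFinset]
  rw [he, Set.ncard_coe_finset]

lemma ncard_of_bijOn {α β : Type*} {s : Set α} {t : Set β} {f : α → β}
    (h : Set.BijOn f s t) : s.ncard = t.ncard := by
  rw [← h.image_eq, Set.ncard_image_of_injOn h.injOn]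

lemma ncard_univ_fn0 {X : Type*} [Unique X] : (Set.univ : Set X).ncard = 1 := by
  rw [Set.ncard_univ, Nat.card_unique]

lemma Tset_zero (a : ℕ) : (Tset a 0).ncard = 1 := by
  have : Tset a 0 = Set.univ := by
    ext y
    constructor
    · intro _; trivial
    · intro _
      refine ⟨fun p => absurd p.2 (by omega), fun i j _ => absurd i.2 (by omega)⟩
  rw [this, ncard_univ_fn0]

lemma Pset_zero (n : ℕ) : (Pset n 0).ncard = 1 := by
  have : Pset n 0 = Set.univ := by
    ext y
    constructor
    · intro _; trivial
    · intro _
      exact ⟨fun p => absurd p.2 (by omega), fun i j _ => absurd i.2 (by omega), fun h => absurd h (by omega)⟩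
  rw [this, ncard_univ_fn0]

def splitAt (a M c : ℕ) (hc : c < M+1) : (Fin (M+1) → ℕ) → (Fin c → ℕ) × (Fin (M-c) → ℕ) :=
  fun y => (fun p => y ⟨p.val, by have := p.isLt; omega⟩,
            fun j => y ⟨c+1+j.val, by have := j.isLt; omega⟩)

lemma piece_card (a M c : ℕ) (hc : c < M+1) :
    {y ∈ Tset a (M+1) | topIdx a M y = c+1}.ncard
      = (Tset a c).ncard * (Tset 0 (M-c)).ncard := by
  rw [← ncard_prod]
  refine ncard_of_bijOn (f := splitAt a M c hc) ⟨?_, ?_, ?_⟩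
  · -- MapsTo
    rintro y ⟨hyT, hyc⟩
    rw [mem_Tset] at hyT
    obtain ⟨hbd, hcnd⟩ := hyT
    rw [topIdx_eq_succ_iff a M c hc] at hyc
    obtain ⟨htop, hlast⟩ := hyc
    have hsmall : ∀ q : Fin (M+1), c < (q:ℕ) → y q + c ≤ (q:ℕ) := by
      intro q hq
      rcases hcnd ⟨c, hc⟩ q (by simpa) with h | h
      · simpa using h
      · exfalso
        have h1 := (hbd q).2
        have h2 := hlast q hq
        simp only [Fin.val_mk] at h
        rw [htop] at h
        omega
    refine Set.mem_prod.mpr ⟨?_, ?_⟩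
    · rw [mem_Tset]
      refine ⟨fun p => ?_, fun i j hij => ?_⟩
      · have := hbd ⟨p.val, by have := p.isLt; omega⟩
        simpa [splitAt] using this
      · have := hcnd ⟨i.val, by have := i.isLt; omega⟩ ⟨j.val, by have := j.isLt; omega⟩
          (by simpa)
        simpa [splitAt] using this
    · rw [mem_Tset]
      refine ⟨fun p => ?_, fun i j hij => ?_⟩
      · have h1 := (hbd ⟨c+1+p.val, by have := p.isLt; omega⟩).1
        have h2 := hsmall ⟨c+1+p.val, by have := p.isLt; omega⟩ (by simp only [Fin.val_mk]; omega)
        simp only [Fin.val_mk] at h1 h2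
        simp only [splitAt]
        omega
      · have := hcnd ⟨c+1+i.val, by have := i.isLt; omega⟩ ⟨c+1+j.val, by have := j.isLt; omega⟩
          (by simp; omega)
        simp only [Fin.val_mk] at this
        simp only [splitAt]
        rcases this with h | h
        · left; omega
        · right; omega
  · -- InjOn
    rintro y1 ⟨hy1T, hy1c⟩ y2 ⟨hy2T, hy2c⟩ heq
    rw [topIdx_eq_succ_iff a M c hc] at hy1c hy2c
    have hpre := fun p => congrFun (congrArg Prod.fst heq) p
    have hsuf := fun j => congrFun (congrArg Prod.snd heq) j
    funext q
    rcases lt_trichotomy (q : ℕ) c with h | h | h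
    · have := hpre ⟨(q : ℕ), h⟩
      simpa [splitAt] using this
    · have e : (⟨c, hc⟩ : Fin (M+1)) = q := Fin.ext (by simp [h])
      rw [← e, hy1c.1, hy2c.1]
    · have := hsuf ⟨(q : ℕ) - c - 1, by have := q.isLt; omega⟩
      simp only [splitAt] at this
      have e : (⟨c+1+((q:ℕ)-c-1), by have := q.isLt; omega⟩ : Fin (M+1)) = q :=
        Fin.ext (by simp; omega)
      rwa [e] at this
  · -- SurjOn
    rintro ⟨x, w⟩ hxw
    rw [Set.mem_prod, mem_Tset, mem_Tset] at hxw
    obtain ⟨⟨hxbd, hxc⟩, hwbd, hwc⟩ := hxw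
    dsimp only at hxbd hxc hwbd hwc
    classical
    set y : Fin (M+1) → ℕ := fun q =>
      if h : (q : ℕ) < c then x ⟨(q : ℕ), h⟩
      else if h2 : (q : ℕ) = c then c+1+a
      else w ⟨(q : ℕ) - c - 1, by have := q.isLt; omega⟩ with hy
    have hyval_pre : ∀ (q : Fin (M+1)) (h : (q:ℕ) < c), y q = x ⟨(q:ℕ), h⟩ := by
      intro q h; simp [hy, h]
    have hyval_mid : ∀ (q : Fin (M+1)), (q:ℕ) = c → y q = c+1+a := by
      intro q h; simp [hy, h]
    have hyval_suf : ∀ (q : Fin (M+1)) (h : c < (q:ℕ)), y q = w ⟨(q:ℕ) - c - 1, by have := q.isLt; omega⟩ := by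
      intro q h
      simp only [hy]
      rw [dif_neg (by omega), dif_neg (by omega)]
    have hwsmall : ∀ (q : Fin (M+1)) (h : c < (q:ℕ)), 1 ≤ y q ∧ y q + c ≤ (q:ℕ) := by
      intro q h
      rw [hyval_suf q h]
      have := hwbd ⟨(q:ℕ) - c - 1, by have := q.isLt; omega⟩
      simp only [Fin.val_mk] at this
      omega
    refine ⟨y, ⟨?_, ?_⟩, ?_⟩
    · rw [mem_Tset]
      refine ⟨fun p => ?_, fun i j hij => ?_⟩
      · rcases lt_trichotomy (p : ℕ) c with h | h | h
        · rw [hyval_pre p h]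
          have := hxbd ⟨(p:ℕ), h⟩
          simp only [Fin.val_mk] at this
          omega
        · rw [hyval_mid p h]
          omega
        · have := hwsmall p h
          have := p.isLt
          omega
      · rcases lt_trichotomy (j : ℕ) c with hj | hj | hj
        · have := hxc ⟨(i:ℕ), by omega⟩ ⟨(j:ℕ), hj⟩ (by simpa)
          rw [hyval_pre i (by omega), hyval_pre j hj]
          simpa using this
        · right
          rw [hyval_mid j hj]
          rcases lt_trichotomy (i : ℕ) c with hi | hi | hi
          · rw [hyval_pre i hi]
            have := hxbd ⟨(i:ℕ), hi⟩
            simp only [Fin.val_mk] at this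
            omega
          · omega
          · omega
        · -- j in suffix
          rcases le_or_gt (i : ℕ) c with hi | hi
          · left
            have := hwsmall j hj
            omega
          · -- both suffix
            have := hwc ⟨(i:ℕ) - c - 1, by have := i.isLt; omega⟩
              ⟨(j:ℕ) - c - 1, by have := j.isLt; omega⟩ (by simp; omega)
            rw [hyval_suf i hi, hyval_suf j hj]
            simp only [Fin.val_mk] at this ⊢
            rcases this with h | h
            · left; omega
            · right; omega
    · rw [topIdx_eq_succ_iff a M c hc]
      refine ⟨hyval_mid ⟨c, hc⟩ rfl, fun q hq => ?_⟩
      have := hwsmall q hq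
      omega
    · have e1 : (splitAt a M c hc y).1 = x := by
        funext p
        simp only [splitAt]
        rw [hyval_pre ⟨(p:ℕ), by have := p.isLt; omega⟩ (by simpa using p.isLt)]
      have e2 : (splitAt a M c hc y).2 = w := by
        funext j
        simp only [splitAt]
        rw [hyval_suf ⟨c+1+(j:ℕ), by have := j.isLt; omega⟩ (by simp only [Fin.val_mk]; omega)]
        congr 1
        apply Fin.ext
        simp only [Fin.val_mk]
        omega
      exact Prod.ext e1 e2

lemma T_rec (a M : ℕ) :
    (Tset a (M+1)).ncard
      = {y ∈ Tset a (M+1) | topIdx a M y = 0}.ncard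
        + ∑ c ∈ range (M+1), (Tset a c).ncard * (Tset 0 (M-c)).ncard := by
  rw [ncard_fiber_sum (Tfin a (M+1)) (topIdx a M) (M+2) (fun y _ => topIdx_lt a M y),
    Finset.sum_range_succ',
    Finset.sum_congr rfl (fun c hcr => piece_card a M c (mem_range.mp hcr))]
  exact add_comm _ _

lemma nohit_succ (b M : ℕ) :
    {y ∈ Tset (b+1) (M+1) | topIdx (b+1) M y = 0} = Tset b (M+1) := by
  ext y
  simp only [Set.mem_setOf_eq, topIdx_eq_zero_iff, mem_Tset]
  constructor
  · rintro ⟨⟨hbd, hc⟩, htop⟩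
    exact ⟨fun p => by have h1 := hbd p; have h2 := htop p; omega, hc⟩
  · rintro ⟨hbd, hc⟩
    exact ⟨⟨fun p => by have h1 := hbd p; omega, hc⟩, fun p => by have h1 := hbd p; omega⟩

lemma nohit_zero (M : ℕ) :
    {y ∈ Tset 0 (M+1) | topIdx 0 M y = 0} = ∅ := by
  ext y
  simp only [Set.mem_setOf_eq, topIdx_eq_zero_iff, mem_Tset, Set.mem_empty_iff_false, iff_false,
    not_and]
  intro hm htop
  have h1 := hm.1 ⟨0, Nat.succ_pos M⟩
  have h2 := htop ⟨0, Nat.succ_pos M⟩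
  simp only [Fin.val_mk] at h1 h2
  omega

lemma T_count (m : ℕ) : ∀ a : ℕ, ((Tset a m).ncard : ℚ) = gc m a := by
  induction m using Nat.strong_induction_on with
  | _ m IH =>
  obtain _ | M := m
  · intro a
    rw [Tset_zero, gc_zero_left]
    norm_num
  · have sumlem : ∀ a : ℕ,
        ((∑ c ∈ range (M+1), (Tset a c).ncard * (Tset 0 (M-c)).ncard : ℕ) : ℚ)
          = gc M (a+1) := by
      intro a
      rw [← gc_conv M a]
      push_cast
      refine Finset.sum_congr rfl fun c hcr => ?_
      rw [IH c (by have := mem_range.mp hcr; omega) a, IH (M-c) (by omega) 0]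
    intro a
    induction a with
    | zero =>
      have h := T_rec 0 M
      rw [nohit_zero M, Set.ncard_empty, zero_add] at h
      rw [h, sumlem 0, gc_one_right, gc_zero_right]
    | succ b ihb =>
      have h := T_rec (b+1) M
      rw [nohit_succ b M] at h
      rw [h, Nat.cast_add, ihb, sumlem (b+1), gc_pascal M b]

lemma mem_Pset {n k : ℕ} (x : Fin k → ℕ) :
    x ∈ Pset n k ↔ (∀ i, 1 ≤ x i ∧ x i ≤ n) ∧
      (∀ i j : Fin k, (i:ℕ) < (j:ℕ) → (x j + (i:ℕ) ≤ (j:ℕ) ∨ x i + (j:ℕ) ≤ x j + (i:ℕ))) ∧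
      ∀ hk : 0 < k, k < x ⟨k-1, by omega⟩ := by
  unfold Pset
  rw [Set.mem_setOf_eq]
  constructor
  · rintro ⟨h1, h2, h3⟩
    exact ⟨h1, (cond_iff x).mp h2, h3⟩
  · rintro ⟨h1, h2, h3⟩
    exact ⟨h1, (cond_iff x).mpr h2, h3⟩

lemma P_last {n K : ℕ} {x : Fin (K+1) → ℕ} (hx : x ∈ Pset n (K+1)) :
    K + 1 < x ⟨K, Nat.lt_succ_self K⟩ := by
  rw [mem_Pset] at hx
  exact hx.2.2 (Nat.succ_pos K)

lemma P_bigstep {n K : ℕ} {x : Fin (K+1) → ℕ} (hx : x ∈ Pset n (K+1))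
    (p : Fin (K+1)) (hp : (p:ℕ) < K) :
    x p + K ≤ x ⟨K, Nat.lt_succ_self K⟩ + p := by
  have hlast := P_last hx
  rw [mem_Pset] at hx
  have h := hx.2.1 p ⟨K, Nat.lt_succ_self K⟩ (by simpa using hp)
  simp only [Fin.val_mk] at h
  rcases h with h | h
  · omega
  · exact h

lemma P_empty (K : ℕ) : Pset (K+1) (K+1) = ∅ := by
  ext x
  simp only [Set.mem_empty_iff_false, iff_false]
  intro hx
  have h1 := P_last hx
  have h2 := (mem_Pset x).mp hx |>.1 ⟨K, Nat.lt_succ_self K⟩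
  omega

lemma P_split (n K : ℕ) (hnk : K + 1 ≤ n) :
    Pset (n+1) (K+1)
      = Pset n (K+1) ∪ {x ∈ Pset (n+1) (K+1) | x ⟨K, Nat.lt_succ_self K⟩ = n+1} := by
  ext x
  simp only [Set.mem_union, Set.mem_setOf_eq]
  constructor
  · intro hx
    by_cases hl : x ⟨K, Nat.lt_succ_self K⟩ = n+1
    · exact Or.inr ⟨hx, hl⟩
    · left
      rw [mem_Pset] at hx ⊢
      obtain ⟨hbd, hc, hg⟩ := hx
      refine ⟨fun i => ?_, hc, hg⟩
      rcases lt_or_ge (i : ℕ) K with hi | hi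
      · have hbig := P_bigstep (by rw [mem_Pset]; exact ⟨hbd, hc, hg⟩) i hi
        have h2 := hbd ⟨K, Nat.lt_succ_self K⟩
        have h3 := hbd i
        have h4 := i.isLt
        omega
      · have he : i = ⟨K, Nat.lt_succ_self K⟩ := Fin.ext (by simp only [Fin.val_mk]; have := i.isLt; omega)
        have h3 := hbd i
        rw [he] at h3 ⊢
        omega
  · intro hx
    rcases hx with hx | ⟨hx, -⟩
    · rw [mem_Pset] at hx ⊢
      exact ⟨fun i => ⟨(hx.1 i).1, le_trans (hx.1 i).2 (Nat.le_succ n)⟩, hx.2.1, hx.2.2⟩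
    · exact hx

lemma P_top_card (n K : ℕ) (hnk : K + 1 ≤ n) :
    {x ∈ Pset (n+1) (K+1) | x ⟨K, Nat.lt_succ_self K⟩ = n+1}.ncard
      = (Tset (n-K) K).ncard := by
  refine ncard_of_bijOn (f := fun (x : Fin (K+1) → ℕ) (p : Fin K) =>
    x ⟨(p:ℕ), by have := p.isLt; omega⟩) ⟨?_, ?_, ?_⟩
  · rintro x ⟨hx, hl⟩
    have hbig := fun (p : Fin (K+1)) (hp : (p:ℕ) < K) => P_bigstep hx p hp
    rw [mem_Pset] at hx
    obtain ⟨hbd, hc, -⟩ := hx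
    rw [mem_Tset]
    refine ⟨fun p => ?_, fun i j hij => ?_⟩
    · have h1 := hbd ⟨(p:ℕ), by have := p.isLt; omega⟩
      have h2 := hbig ⟨(p:ℕ), by have := p.isLt; omega⟩ (by simpa using p.isLt)
      rw [hl] at h2
      simp only [Fin.val_mk] at h1 h2 ⊢
      have h3 := p.isLt
      omega
    · have := hc ⟨(i:ℕ), by have := i.isLt; omega⟩ ⟨(j:ℕ), by have := j.isLt; omega⟩
        (by simpa)
      simpa using this
  · rintro x1 ⟨hx1, hl1⟩ x2 ⟨hx2, hl2⟩ heq
    funext q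
    rcases lt_or_ge (q : ℕ) K with h | h
    · exact congrFun heq ⟨(q:ℕ), h⟩
    · have he : q = ⟨K, Nat.lt_succ_self K⟩ := Fin.ext (by simp only [Fin.val_mk]; have := q.isLt; omega)
      rw [he, hl1, hl2]
  · intro y hy
    rw [mem_Tset] at hy
    obtain ⟨hbd, hc⟩ := hy
    classical
    refine ⟨fun q => if h : (q:ℕ) < K then y ⟨(q:ℕ), h⟩ else n+1, ⟨?_, ?_⟩, ?_⟩
    · rw [mem_Pset]
      refine ⟨fun i => ?_, fun i j hij => ?_, fun _ => ?_⟩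
      · by_cases h : (i:ℕ) < K
        · rw [dif_pos h]
          have := hbd ⟨(i:ℕ), h⟩
          simp only [Fin.val_mk] at this
          omega
        · rw [dif_neg h]
          omega
      · by_cases hj : (j:ℕ) < K
        · rw [dif_pos hj, dif_pos (by omega)]
          have := hc ⟨(i:ℕ), by omega⟩ ⟨(j:ℕ), hj⟩ (by simpa)
          simpa using this
        · rw [dif_neg hj]
          right
          by_cases hi : (i:ℕ) < K
          · rw [dif_pos hi]
            have := hbd ⟨(i:ℕ), hi⟩
            simp only [Fin.val_mk] at this
            have := j.isLt
            omega
          · omega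
      · simp only [Fin.val_mk]
        rw [dif_neg (by omega)]
        omega
    · simp only [Set.mem_setOf_eq, Fin.val_mk]
      rw [dif_neg (by omega)]
    · funext p
      simp only [Fin.val_mk]
      rw [dif_pos p.isLt]

lemma P_count : ∀ (k n : ℕ), k < n → ((Pset n k).ncard : ℚ) = gc k (n-1-k) := by
  intro k
  match k with
  | 0 =>
    intro n _
    rw [Pset_zero, gc_zero_left]
    norm_num
  | K+1 =>
    intro n hn
    have hbase : K+2 ≤ n := hn
    induction n, hbase using Nat.le_induction with
    | base =>
      rw [show K+2 = (K+1)+1 from rfl, P_split (K+1) K (le_refl _), P_empty, Set.empty_union,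
        P_top_card (K+1) K (le_refl _)]
      rw [show (K+1)-K = 1 from by omega, T_count K 1]
      rw [show K+2-1-(K+1) = 0 from by omega, gc_zero_right, gc_one_right]
    | succ n hn2 IH =>
      obtain ⟨d, rfl⟩ : ∃ d, n = K+2+d := ⟨n-K-2, by omega⟩
      rw [P_split (K+2+d) K (by omega)]
      have hdisj : Disjoint (Pset (K+2+d) (K+1))
          {x ∈ Pset (K+2+d+1) (K+1) | x ⟨K, Nat.lt_succ_self K⟩ = K+2+d+1} := by
        rw [Set.disjoint_left]
        rintro x hx1 ⟨-, hl⟩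
        have := (mem_Pset x).mp hx1 |>.1 ⟨K, Nat.lt_succ_self K⟩
        omega
      rw [Set.ncard_union_eq hdisj (Pfin _ _) ((Pfin (K+2+d+1) (K+1)).subset (fun x hx => hx.1))]
      push_cast
      rw [IH (by omega), P_top_card (K+2+d) K (by omega), T_count K (K+2+d-K)]
      rw [show K+2+d-1-(K+1) = d from by omega, show K+2+d-K = d+2 from by omega,
        show K+2+d-(K+1) = d+1 from by omega]
      exact (gc_pascal K d).symm

lemma S1 {n k : ℕ} (hk : k < n) (u : Fin n → ℕ)
    (hcond : ∀ i j : Fin n, (i:ℕ) < (j:ℕ) → (u j + (i:ℕ) ≤ (j:ℕ) ∨ u i + (j:ℕ) ≤ u j + (i:ℕ)))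
    (h3 : 1 ≤ k → k < u ⟨k-1, by omega⟩)
    (h4 : ∀ j : Fin n, k < (j:ℕ)+1 → u j ≤ (j:ℕ)+1) :
    ∀ j : Fin n, k ≤ (j:ℕ) → u j + k ≤ (j:ℕ)+1 := by
  intro j hj
  have h4j := h4 j (by omega)
  rcases Nat.eq_zero_or_pos k with hk0 | hk0
  · omega
  · have h3' := h3 hk0
    have hcc := hcond ⟨k-1, by omega⟩ j (by simp only [Fin.val_mk]; omega)
    simp only [Fin.val_mk] at hcc h3'
    omega

theorem stmt16' (n k : ℕ) (hn : 1 ≤ n) (hk : k ≤ n - 1) :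
    ({u : Fin n → ℕ | (∀ i, 1 ≤ u i ∧ u i ≤ n) ∧ Cond u ∧
        (1 ≤ k → k < u ⟨k - 1, by have := hk; omega⟩) ∧
        (∀ j : Fin n, k < (j : ℕ) + 1 → u j ≤ (j : ℕ) + 1)}.ncard : ℚ)
      = gc k (n - 1 - k) * (catalan (n-k) : ℚ) := by
  have hkn : k < n := by omega
  have hbij : Set.BijOn (fun (u : Fin n → ℕ) =>
      ((fun p : Fin k => u ⟨(p:ℕ), by have := p.isLt; omega⟩),
       (fun j : Fin (n-k) => u ⟨k+(j:ℕ), by have := j.isLt; omega⟩)))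
      {u : Fin n → ℕ | (∀ i, 1 ≤ u i ∧ u i ≤ n) ∧ Cond u ∧
        (1 ≤ k → k < u ⟨k - 1, by omega⟩) ∧
        (∀ j : Fin n, k < (j : ℕ) + 1 → u j ≤ (j : ℕ) + 1)}
      (Pset n k ×ˢ Tset 0 (n-k)) := by
    refine ⟨?_, ?_, ?_⟩
    · rintro u ⟨hbd, hcnd, h3, h4⟩
      rw [cond_iff] at hcnd
      have hs1 := S1 hkn u hcnd h3 h4
      refine Set.mem_prod.mpr ⟨?_, ?_⟩
      · rw [mem_Pset]
        refine ⟨fun i => hbd _, fun i j hij => ?_, fun hk0 => ?_⟩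
        · have := hcnd ⟨(i:ℕ), by have := i.isLt; omega⟩ ⟨(j:ℕ), by have := j.isLt; omega⟩
            (by simpa)
          simpa using this
        · have := h3 hk0
          simp only [Fin.val_mk]
          convert this using 2
      · rw [mem_Tset]
        refine ⟨fun p => ?_, fun i j hij => ?_⟩
        · have h1 := (hbd ⟨k+(p:ℕ), by have := p.isLt; omega⟩).1
          have h2 := hs1 ⟨k+(p:ℕ), by have := p.isLt; omega⟩ (by simp only [Fin.val_mk]; omega)
          simp only [Fin.val_mk] at h1 h2 ⊢
          omega
        · have := hcnd ⟨k+(i:ℕ), by have := i.isLt; omega⟩ ⟨k+(j:ℕ), by have := j.isLt; omega⟩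
            (by simp only [Fin.val_mk]; omega)
          simp only [Fin.val_mk] at this ⊢
          rcases this with h | h
          · left; omega
          · right; omega
    · rintro u1 hu1 u2 hu2 heq
      have hpre := fun p => congrFun (congrArg Prod.fst heq) p
      have hsuf := fun j => congrFun (congrArg Prod.snd heq) j
      funext q
      rcases lt_or_ge (q:ℕ) k with h | h
      · have := hpre ⟨(q:ℕ), h⟩
        simpa using this
      · have := hsuf ⟨(q:ℕ)-k, by have := q.isLt; omega⟩
        simp only at this
        have e : (⟨k+((q:ℕ)-k), by have := q.isLt; omega⟩ : Fin n) = q :=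
          Fin.ext (by simp only [Fin.val_mk]; omega)
        rwa [e] at this
    · rintro ⟨x, w⟩ hxw
      rw [Set.mem_prod, mem_Pset, mem_Tset] at hxw
      obtain ⟨⟨hxbd, hxc, hxg⟩, hwbd, hwc⟩ := hxw
      dsimp only at hxbd hxc hxg hwbd hwc
      classical
      set u : Fin n → ℕ := fun q => if h : (q:ℕ) < k then x ⟨(q:ℕ), h⟩
        else w ⟨(q:ℕ)-k, by have := q.isLt; omega⟩ with hu
      have hupre : ∀ (q : Fin n) (h : (q:ℕ) < k), u q = x ⟨(q:ℕ), h⟩ := by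
        intro q h; simp [hu, h]
      have husuf : ∀ (q : Fin n) (h : k ≤ (q:ℕ)), u q = w ⟨(q:ℕ)-k, by have := q.isLt; omega⟩ := by
        intro q h
        simp only [hu]
        rw [dif_neg (by omega)]
      have husmall : ∀ (q : Fin n) (h : k ≤ (q:ℕ)), 1 ≤ u q ∧ u q + k ≤ (q:ℕ)+1 := by
        intro q h
        rw [husuf q h]
        have := hwbd ⟨(q:ℕ)-k, by have := q.isLt; omega⟩
        simp only [Fin.val_mk] at this
        omega
      refine ⟨u, ⟨?_, ?_, ?_, ?_⟩, ?_⟩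
      · intro i
        by_cases h : (i:ℕ) < k
        · rw [hupre i h]
          exact hxbd _
        · have h1 := husmall i (by omega)
          have h2 := i.isLt
          omega
      · rw [cond_iff]
        intro i j hij
        by_cases hj : (j:ℕ) < k
        · rw [hupre i (by omega), hupre j hj]
          have := hxc ⟨(i:ℕ), by omega⟩ ⟨(j:ℕ), hj⟩ (by simpa)
          simpa using this
        · by_cases hi : (i:ℕ) < k
          · left
            have := husmall j (by omega)
            omega
          · rw [husuf i (by omega), husuf j (by omega)]
            have := hwc ⟨(i:ℕ)-k, by have := i.isLt; omega⟩ ⟨(j:ℕ)-k, by have := j.isLt; omega⟩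
              (by simp only [Fin.val_mk]; omega)
            simp only [Fin.val_mk] at this ⊢
            rcases this with h | h
            · left; omega
            · right; omega
      · intro hk0
        rw [hupre ⟨k-1, by omega⟩ (by simp only [Fin.val_mk]; omega)]
        have := hxg hk0
        simp only [Fin.val_mk] at this ⊢
        convert this using 2
      · intro j hjk
        have := husmall j (by omega)
        omega
      · refine Prod.ext (funext fun p => ?_) (funext fun j => ?_)
        · simp only
          rw [hupre ⟨(p:ℕ), by have := p.isLt; omega⟩ (by simp only [Fin.val_mk]; exact p.isLt)]
        · simp only
          rw [husuf ⟨k+(j:ℕ), by have := j.isLt; omega⟩ (by simp only [Fin.val_mk]; omega)]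
          congr 1
          apply Fin.ext
          simp only [Fin.val_mk]
          omega
  rw [ncard_of_bijOn hbij, ncard_prod]
  push_cast
  rw [P_count k n hkn, T_count (n-k) 0, gc_zero_right]

theorem stmt16 (n k : ℕ) (hn : 1 ≤ n) (hk : k ≤ n - 1) :
    ({u : Fin n → ℕ | (∀ i, 1 ≤ u i ∧ u i ≤ n) ∧ Cond u ∧
        (1 ≤ k → k < u ⟨k - 1, by omega⟩) ∧
        (∀ j : Fin n, k < (j : ℕ) + 1 → u j ≤ (j : ℕ) + 1)}.ncard : ℚ)
      = gc k (n - 1 - k) * cat (n - k) := by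
  rw [stmt16' n k hn hk, catalan_cast]
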